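/- Let a ≥ 2 and n ≥ 1 be natural numbers, let m ≥ 2, and let l_1 < l_2 < ... < l_m be positive integers such that the numbers p_i = a^{l_i} n + 1 are (distinct) primes for i = 1, ..., m, and set N = p_1 p_2 ⋯ p_m. Then a^{l_2}·n does not divide N − 1; in particular, p_2 − 1 does not divide N − 1, so N fails Korselt's criterion. -/

import Mathlib

/-- If `p i = a ^ (l i) * n + 1` are primes with `l` strictly increasing and positive
(`a ≥ 2`, `n ≥ 1`, `m ≥ 2`) and `N = ∏ p i`, then `a ^ (l 1) * n ∤ N - 1`;
in particular `p 1 - 1 = a ^ (l 1) * n` does not divide `N - 1`, so `N` fails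
Korselt's criterion. -/
theorem fails_korselt_of_tuple (a n m : ℕ) (ha : 2 ≤ a) (hn : 1 ≤ n) (hm : 2 ≤ m)
    (l : Fin m → ℕ) (hl : ∀ i, 1 ≤ l i) (hmono : StrictMono l)
    (hprime : ∀ i, Nat.Prime (a ^ l i * n + 1)) :
    ¬ (a ^ l ⟨1, hm⟩ * n ∣ (∏ i, (a ^ l i * n + 1)) - 1) ∧
    ¬ ((a ^ l ⟨1, hm⟩ * n + 1) - 1 ∣ (∏ i, (a ^ l i * n + 1)) - 1) := by
  have hm0 : 0 < m := by omega
  set i0 : Fin m := ⟨0, hm0⟩ with hi0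
  set i1 : Fin m := ⟨1, hm⟩ with hi1
  set M := a ^ l i1 * n with hM
  have hlt01 : l i0 < l i1 := hmono (by simp [hi0, hi1, Fin.lt_def])
  have ha0 : 0 < a := by omega
  have hlt : a ^ l i0 * n < M := by
    have h1 : a ^ l i0 < a ^ l i1 := Nat.pow_lt_pow_right (by omega) hlt01
    exact Nat.mul_lt_mul_of_lt_of_le h1 le_rfl (by omega)
  have hpos : 0 < a ^ l i0 * n := Nat.mul_pos (Nat.pow_pos ha0) (by omega)
  have key : ¬ (M ∣ (∏ i, (a ^ l i * n + 1)) - 1) := by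
    intro hdvd
    have hN1 : 1 ≤ ∏ i, (a ^ l i * n + 1) :=
      Finset.one_le_prod' (fun i _ => by omega)
    -- in ZMod M
    have hMdvd : ∀ i : Fin m, i ≠ i0 → M ∣ a ^ l i * n := by
      intro i hi
      apply Nat.mul_dvd_mul_right
      apply pow_dvd_pow
      apply hmono.monotone
      have : (1 : ℕ) ≤ i.val := by
        rcases Nat.eq_zero_or_pos i.val with h | h
        · exact absurd (Fin.ext h) hi
        · exact h
      exact this
    have hprod : ((∏ i, (a ^ l i * n + 1) : ℕ) : ZMod M) = (a ^ l i0 * n : ℕ) + 1 := by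
      push_cast
      rw [← Finset.mul_prod_erase Finset.univ _ (Finset.mem_univ i0)]
      have : ∀ i ∈ Finset.univ.erase i0, ((a : ZMod M) ^ l i * n + 1) = 1 := by
        intro i hi
        have hd := hMdvd i (Finset.mem_erase.mp hi).1
        have : ((a ^ l i * n : ℕ) : ZMod M) = 0 :=
          (ZMod.natCast_eq_zero_iff _ _).mpr hd
        push_cast at this
        rw [this]; ring
      rw [Finset.prod_congr rfl this, Finset.prod_const_one, mul_one]
    have hcast : (((∏ i, (a ^ l i * n + 1)) - 1 : ℕ) : ZMod M) = 0 :=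
      (ZMod.natCast_eq_zero_iff _ _).mpr hdvd
    rw [Nat.cast_sub hN1, hprod, Nat.cast_one, add_sub_cancel_right] at hcast
    have : M ∣ a ^ l i0 * n := (ZMod.natCast_eq_zero_iff _ _).mp hcast
    have := Nat.le_of_dvd hpos this
    omega
  exact ⟨key, by simpa using key⟩
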